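/- Fix finite sets of plays $[K]$ and arms $[M]$, capacities $N_m \in \mathbb{N}$, and weights $X_{m,k} \ge 0$. For $S \subseteq [M]$ define $h(S)$ as the maximum over families of pairwise disjoint sets $(C_m)_{m \in S}$, $C_m \subseteq [K]$, of $\sum_{m \in S} \mathcal{R}_m(C_m)$, where $\mathcal{R}_m(C_m)$ is the sum of the $\min(N_m, |C_m|)$ largest values among $\{X_{m,k} : k \in C_m\}$. Then $h$ is submodular: for all $S, T \subseteq [M]$, $h(S) + h(T) \ge h(S \cup T) + h(S \cap T)$. -/

import Mathlib

open scoped BigOperators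

/-- Sum of the `N` largest elements of a finite multiset of reals. -/
noncomputable def topSum (N : ℕ) (s : Multiset ℝ) : ℝ :=
  ((s.sort (· ≤ ·)).drop (Multiset.card s - N)).sum

/-- Value of the optimal capacitated assignment using only arms in `S`. -/
noncomputable def hOpt (M K : ℕ) (N : Fin M → ℕ) (X : Fin M → Fin K → ℝ)
    (S : Finset (Fin M)) : ℝ :=
  ⨆ C : {C : Fin M → Finset (Fin K) //
          ∀ m₁ ∈ S, ∀ m₂ ∈ S, m₁ ≠ m₂ → Disjoint (C m₁) (C m₂)},
    ∑ m ∈ S, topSum (N m) (Multiset.map (X m) (C.1 m).val)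

lemma topSum_of_card_le {N : ℕ} {s : Multiset ℝ} (h : Multiset.card s ≤ N) :
    topSum N s = s.sum := by
  unfold topSum
  rw [Nat.sub_eq_zero_of_le h, List.drop_zero]
  rw [← Multiset.sum_coe, Multiset.sort_eq]

lemma topSum_exists (N : ℕ) (s : Multiset ℝ) :
    ∃ u : Multiset ℝ, u ≤ s ∧ Multiset.card u ≤ N ∧ topSum N s = u.sum := by
  refine ⟨↑((s.sort (· ≤ ·)).drop (Multiset.card s - N)), ?_, ?_, ?_⟩
  · have h1 : ((s.sort (· ≤ ·)).drop (Multiset.card s - N)).Sublist (s.sort (· ≤ ·)) :=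
      List.drop_sublist _ _
    have h2 := Multiset.coe_le.mpr h1.subperm
    rwa [Multiset.sort_eq] at h2
  · simp only [Multiset.coe_card, List.length_drop, Multiset.length_sort]
    omega
  · rw [topSum, Multiset.sum_coe]

lemma exists_le_of_le_map {α β : Type*} (f : α → β) {s : Multiset α} {u : Multiset β}
    (h : u ≤ s.map f) : ∃ t, t ≤ s ∧ t.map f = u := by
  revert h
  refine Quotient.inductionOn s (fun l => ?_)
  refine Quotient.inductionOn u (fun l' h => ?_)
  have h' : List.Subperm l' (l.map f) := Multiset.coe_le.mp h
  obtain ⟨l'', hperm, hsub⟩ := h'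
  obtain ⟨r, hr, rfl⟩ := List.sublist_map_iff.mp hsub
  exact ⟨↑r, Multiset.coe_le.mpr hr.subperm, Quot.sound hperm⟩

namespace Submod


variable {M K : ℕ}

noncomputable def matchVal (X : Fin M → Fin K → ℝ) {N : Fin M → ℕ}
    (x : Fin K → Option (Σ m : Fin M, Fin (N m))) : ℝ :=
  ∑ k, (x k).elim 0 (fun s => X s.1 k)

/-- Double counting: the value of a matching equals the sum over arms in `S` of
the values of the fibers `t m`, provided the fibers are the matched sets. -/
lemma matchVal_eq_sum (X : Fin M → Fin K → ℝ) {N : Fin M → ℕ}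
    (x : Fin K → Option (Σ m : Fin M, Fin (N m))) (S : Finset (Fin M))
    (t : Fin M → Finset (Fin K))
    (hdisj : ∀ m₁ ∈ S, ∀ m₂ ∈ S, m₁ ≠ m₂ → Disjoint (t m₁) (t m₂))
    (hmem : ∀ m ∈ S, ∀ k ∈ t m, ∃ j : Fin (N m), x k = some ⟨m, j⟩)
    (hcov : ∀ k s, x k = some s → s.1 ∈ S ∧ k ∈ t s.1) :
    matchVal X x = ∑ m ∈ S, ∑ k ∈ t m, X m k := by
  classical
  have hstep : ∀ m ∈ S, ∑ k ∈ t m, X m k = ∑ k ∈ t m, (x k).elim 0 (fun s => X s.1 k) := by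
    intro m hm
    refine Finset.sum_congr rfl (fun k hk => ?_)
    obtain ⟨j, hj⟩ := hmem m hm k hk
    rw [hj]; rfl
  rw [Finset.sum_congr rfl hstep, ← Finset.sum_biUnion hdisj]
  rw [matchVal]
  refine (Finset.sum_subset (Finset.subset_univ _) ?_).symm
  intro k _ hk
  cases hx : x k with
  | none => rfl
  | some s =>
    exfalso
    obtain ⟨hs1, hs2⟩ := hcov k s hx
    exact hk (Finset.mem_biUnion.mpr ⟨s.1, hs1, hs2⟩)

lemma matchVal_le_hOpt (N : Fin M → ℕ) (X : Fin M → Fin K → ℝ) (S : Finset (Fin M))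
    (x : Fin K → Option (Σ m : Fin M, Fin (N m)))
    (hinj : ∀ k k' s, x k = some s → x k' = some s → k = k')
    (harm : ∀ k s, x k = some s → s.1 ∈ S) :
    matchVal X x ≤ hOpt M K N X S := by
  classical
  set C : Fin M → Finset (Fin K) :=
    fun m => Finset.univ.filter (fun k => ∃ s, x k = some s ∧ s.1 = m) with hCdef
  have hmemC : ∀ m k, k ∈ C m ↔ ∃ s, x k = some s ∧ s.1 = m := by
    intro m k; simp [hCdef]
  have hdisj : ∀ m₁ ∈ Finset.univ (α := Fin M), ∀ m₂ ∈ Finset.univ (α := Fin M),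
      m₁ ≠ m₂ → Disjoint (C m₁) (C m₂) := by
    intro m₁ _ m₂ _ hne
    rw [Finset.disjoint_left]
    intro k hk1 hk2
    obtain ⟨s, hs, rfl⟩ := (hmemC _ k).mp hk1
    obtain ⟨s', hs', h2⟩ := (hmemC _ k).mp hk2
    rw [hs] at hs'
    exact hne (by rw [← h2, Option.some_inj.mp hs'])
  have hdisjS : ∀ m₁ ∈ S, ∀ m₂ ∈ S, m₁ ≠ m₂ → Disjoint (C m₁) (C m₂) :=
    fun m₁ _ m₂ _ h => hdisj m₁ (Finset.mem_univ _) m₂ (Finset.mem_univ _) h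
  have hcard : ∀ m, (C m).card ≤ N m := by
    intro m
    have : (C m).card ≤ (Finset.range (N m)).card := by
      apply Finset.card_le_card_of_injOn
        (fun k => ((x k).map (fun s => (s.2 : ℕ))).getD 0)
      · intro k hk
        obtain ⟨s, hs, h1⟩ := (hmemC m k).mp hk
        obtain ⟨m1, j1⟩ := s
        simp only at h1
        subst h1
        simp only [hs]
        simp [j1.isLt]
      · intro k hk k' hk' heq
        rw [Finset.mem_coe] at hk hk'
        obtain ⟨s, hs, h1⟩ := (hmemC m k).mp hk
        obtain ⟨s', hs', h1'⟩ := (hmemC m k').mp hk'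
        simp only [hs, hs', Option.map_some, Option.getD_some] at heq
        have hss : s = s' := by
          obtain ⟨m1, j1⟩ := s
          obtain ⟨m2, j2⟩ := s'
          simp only at h1 h1' heq
          subst h1; subst h1'
          simp only [Sigma.mk.inj_iff, heq_eq_eq]
          exact ⟨trivial, Fin.ext heq⟩
        exact hinj k k' s hs (by rw [hs', hss])
    simpa using this
  have hval : matchVal X x = ∑ m ∈ S, ∑ k ∈ C m, X m k := by
    apply matchVal_eq_sum X x S C hdisjS
    · intro m hm k hk
      obtain ⟨s, hs, h1⟩ := (hmemC m k).mp hk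
      obtain ⟨m1, j1⟩ := s
      simp only at h1; subst h1
      exact ⟨j1, hs⟩
    · intro k s hs
      exact ⟨harm k s hs, (hmemC _ k).mpr ⟨s, hs, rfl⟩⟩
  have htop : ∀ m ∈ S, ∑ k ∈ C m, X m k = topSum (N m) (Multiset.map (X m) (C m).val) := by
    intro m _
    rw [topSum_of_card_le (by simpa using hcard m)]
    rfl
  rw [hval, Finset.sum_congr rfl htop]
  have hbdd : BddAbove (Set.range (fun C : {C : Fin M → Finset (Fin K) //
      ∀ m₁ ∈ S, ∀ m₂ ∈ S, m₁ ≠ m₂ → Disjoint (C m₁) (C m₂)} =>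
      ∑ m ∈ S, topSum (N m) (Multiset.map (X m) (C.1 m).val))) :=
    Set.Finite.bddAbove (Set.finite_range _)
  exact le_ciSup hbdd ⟨C, hdisjS⟩



lemma exists_matching (N : Fin M → ℕ) (X : Fin M → Fin K → ℝ) (S : Finset (Fin M))
    (C : Fin M → Finset (Fin K))
    (hC : ∀ m₁ ∈ S, ∀ m₂ ∈ S, m₁ ≠ m₂ → Disjoint (C m₁) (C m₂)) :
    ∃ x : Fin K → Option (Σ m : Fin M, Fin (N m)),
      (∀ k k' s, x k = some s → x k' = some s → k = k') ∧
      (∀ k s, x k = some s → s.1 ∈ S) ∧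
      ∑ m ∈ S, topSum (N m) (Multiset.map (X m) (C m).val) = matchVal X x := by
  classical
  have H : ∀ m : Fin M, ∃ t : Finset (Fin K), t ⊆ C m ∧ t.card ≤ N m ∧
      topSum (N m) (Multiset.map (X m) (C m).val) = ∑ k ∈ t, X m k := by
    intro m
    obtain ⟨u, hu1, hu2, hu3⟩ := topSum_exists (N m) (Multiset.map (X m) (C m).val)
    obtain ⟨t', ht'1, ht'2⟩ := exists_le_of_le_map (X m) hu1
    have hnd : t'.Nodup := Multiset.nodup_of_le ht'1 (C m).nodup
    refine ⟨⟨t', hnd⟩, ?_, ?_, ?_⟩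
    · intro k hk
      rw [← Finset.mem_val]
      exact Multiset.subset_of_le ht'1 hk
    · have : Multiset.card t' = Multiset.card u := by rw [← ht'2, Multiset.card_map]
      simpa [Finset.card, this] using hu2
    · rw [hu3, ← ht'2, Finset.sum]
  choose t ht1 ht2 ht3 using H
  have huniq : ∀ k m m', m ∈ S → m' ∈ S → k ∈ t m → k ∈ t m' → m = m' := by
    intro k m m' hm hm' hk hk'
    by_contra hne
    exact Finset.disjoint_left.mp (hC m hm m' hm' hne) (ht1 m hk) (ht1 m' hk')
  set idx : ∀ m (k : Fin K), k ∈ t m → Fin (N m) :=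
    fun m k hk => ⟨((t m).equivFin ⟨k, hk⟩ : Fin _).val,
      lt_of_lt_of_le ((t m).equivFin ⟨k, hk⟩).isLt (ht2 m)⟩ with hidx
  have idxinj : ∀ m k k' hk hk', idx m k hk = idx m k' hk' → k = k' := by
    intro m k k' hk hk' h
    have h2 : ((t m).equivFin ⟨k, hk⟩ : Fin _) = (t m).equivFin ⟨k', hk'⟩ := by
      apply Fin.ext
      simpa [hidx] using congrArg Fin.val h
    have := (t m).equivFin.injective h2
    exact congrArg Subtype.val this
  set x : Fin K → Option (Σ m : Fin M, Fin (N m)) :=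
    fun k => if h : ∃ m, m ∈ S ∧ k ∈ t m
      then some ⟨h.choose, idx h.choose k h.choose_spec.2⟩ else none with hx
  have hxk : ∀ k m (hm : m ∈ S) (hk : k ∈ t m), x k = some ⟨m, idx m k hk⟩ := by
    intro k m hm hk
    have h : ∃ m, m ∈ S ∧ k ∈ t m := ⟨m, hm, hk⟩
    have hcm : h.choose = m := huniq k _ _ h.choose_spec.1 hm h.choose_spec.2 hk
    simp only [hx, dif_pos h]
    subst hcm
    rfl
  refine ⟨x, ?_, ?_, ?_⟩
  · intro k k' s hk hk'
    obtain ⟨m, hm, hkm⟩ : ∃ m, m ∈ S ∧ k ∈ t m := by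
      by_contra hcon
      simp only [hx, dif_neg hcon] at hk
      exact nomatch hk
    obtain ⟨m', hm', hkm'⟩ : ∃ m, m ∈ S ∧ k' ∈ t m := by
      by_contra hcon
      simp only [hx, dif_neg hcon] at hk'
      exact nomatch hk'
    have e1 := (hxk k m hm hkm).symm.trans hk
    have e2 := (hxk k' m' hm' hkm').symm.trans hk'
    rw [Option.some_inj] at e1 e2
    have e := e1.trans e2.symm
    obtain ⟨efst, esnd⟩ := Sigma.mk.inj_iff.mp e
    subst efst
    exact idxinj m k k' hkm hkm' (eq_of_heq esnd)
  · intro k s hk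
    obtain ⟨m, hm, hkm⟩ : ∃ m, m ∈ S ∧ k ∈ t m := by
      by_contra hcon
      simp only [hx, dif_neg hcon] at hk
      exact nomatch hk
    have e := (hxk k m hm hkm).symm.trans hk
    rw [Option.some_inj] at e
    rw [← e]
    exact hm
  · rw [Finset.sum_congr rfl (fun m hm => ht3 m)]
    refine (matchVal_eq_sum X x S t ?_ ?_ ?_).symm
    · intro m₁ h₁ m₂ h₂ hne
      rw [Finset.disjoint_left]
      intro k hk hk'
      exact hne (huniq k _ _ h₁ h₂ hk hk')
    · intro m hm k hk
      exact ⟨idx m k hk, hxk k m hm hk⟩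
    · intro k s hs
      obtain ⟨m, hm, hkm⟩ : ∃ m, m ∈ S ∧ k ∈ t m := by
        by_contra hcon
        simp only [hx, dif_neg hcon] at hs
        exact nomatch hs
      have e := (hxk k m hm hkm).symm.trans hs
      rw [Option.some_inj] at e
      rw [← e]
      exact ⟨hm, hkm⟩



noncomputable def pinv {α : Type*} {K : ℕ} (b : Fin K → Option α) : α → Option (Fin K) :=
  fun s => @dite _ (∃ k, b k = some s) (Classical.propDecidable _)
    (fun h => some h.choose) (fun _ => none)

lemma pinv_some {α : Type*} {K : ℕ} {b : Fin K → Option α}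
    (hinj : ∀ k k' s, b k = some s → b k' = some s → k = k')
    {k : Fin K} {s : α} (h : b k = some s) : pinv b s = some k := by
  have hex : ∃ k, b k = some s := ⟨k, h⟩
  rw [pinv, dif_pos hex, Option.some_inj]
  exact hinj _ _ _ hex.choose_spec h

lemma pinv_spec {α : Type*} {K : ℕ} {b : Fin K → Option α} {s : α} {k : Fin K}
    (h : pinv b s = some k) : b k = some s := by
  rw [pinv] at h
  by_cases hex : ∃ k, b k = some s
  · rw [dif_pos hex] at h
    rw [Option.some_inj] at h
    rw [← h]
    exact hex.choose_spec
  · rw [dif_neg hex] at h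
    exact nomatch h

def iterOpt {K : ℕ} (g : Fin K → Option (Fin K)) : ℕ → Fin K → Option (Fin K)
  | 0 => fun k => some k
  | n + 1 => fun k => (g k).bind (iterOpt g n)

lemma split {M K : ℕ} (N : Fin M → ℕ) (X : Fin M → Fin K → ℝ) (S T : Finset (Fin M))
    (a b : Fin K → Option (Σ m : Fin M, Fin (N m)))
    (hainj : ∀ k k' s, a k = some s → a k' = some s → k = k')
    (haarm : ∀ k s, a k = some s → s.1 ∈ S ∪ T)
    (hbinj : ∀ k k' s, b k = some s → b k' = some s → k = k')
    (hbarm : ∀ k s, b k = some s → s.1 ∈ S ∩ T) :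
    ∃ a' b' : Fin K → Option (Σ m : Fin M, Fin (N m)),
      (∀ k k' s, a' k = some s → a' k' = some s → k = k') ∧
      (∀ k s, a' k = some s → s.1 ∈ S) ∧
      (∀ k k' s, b' k = some s → b' k' = some s → k = k') ∧
      (∀ k s, b' k = some s → s.1 ∈ T) ∧
      matchVal X a' + matchVal X b' = matchVal X a + matchVal X b := by
  classical
  set τ' := pinv b with hτ'
  set σ' := pinv a with hσ'
  set g : Fin K → Option (Fin K) := fun k => (a k).bind τ' with hg
  set cT : Fin K → Prop := fun k =>
    ∃ n k' s, iterOpt g n k = some k' ∧ a k' = some s ∧ s.1 ∈ T ∧ s.1 ∉ S with hcT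
  have L1 : ∀ k₀ k₁, g k₀ = some k₁ → (cT k₀ ↔ cT k₁) := by
    intro k₀ k₁ hgk
    constructor
    · rintro ⟨n, k', s, hiter, ha, hT, hS⟩
      cases n with
      | zero =>
        have hkk : k₀ = k' := Option.some_inj.mp hiter
        subst hkk
        obtain ⟨s₀, ha₀, hτ⟩ : ∃ s₀, a k₀ = some s₀ ∧ τ' s₀ = some k₁ := by
          cases hak : a k₀ with
          | none => rw [hg] at hgk; simp [hak] at hgk
          | some s₀ =>
            refine ⟨s₀, rfl, ?_⟩
            rw [hg] at hgk; simpa [hak] using hgk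
        have hss : s₀ = s := by rw [ha₀] at ha; exact Option.some_inj.mp ha
        subst hss
        have hb := pinv_spec hτ
        exact absurd (Finset.mem_inter.mp (hbarm k₁ s₀ hb)).1 hS
      | succ n =>
        refine ⟨n, k', s, ?_, ha, hT, hS⟩
        have e : iterOpt g (n+1) k₀ = (g k₀).bind (iterOpt g n) := rfl
        rw [e, hgk] at hiter
        exact hiter
    · rintro ⟨n, k', s, hiter, ha, hT, hS⟩
      refine ⟨n+1, k', s, ?_, ha, hT, hS⟩
      show (g k₀).bind (iterOpt g n) = some k'
      rw [hgk]
      exact hiter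
  have L2 : ∀ k, a k = none → ¬ cT k := by
    rintro k hak ⟨n, k', s, hiter, ha, hT, hS⟩
    cases n with
    | zero =>
      have hkk : k = k' := Option.some_inj.mp hiter
      subst hkk
      rw [hak] at ha
      exact nomatch ha
    | succ n =>
      have e : iterOpt g (n+1) k = (g k).bind (iterOpt g n) := rfl
      rw [e] at hiter
      rw [hg] at hiter
      simp [hak] at hiter
  have L0 : ∀ k, cT k → ∃ s, a k = some s ∧ s.1 ∈ T := by
    rintro k ⟨n, k', s, hiter, ha, hT, hS⟩
    cases n with
    | zero =>
      have hkk : k = k' := Option.some_inj.mp hiter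
      subst hkk
      exact ⟨s, ha, hT⟩
    | succ n =>
      have e : iterOpt g (n+1) k = (g k).bind (iterOpt g n) := rfl
      rw [e] at hiter
      cases hak : a k with
      | none => rw [hg] at hiter; simp [hak] at hiter
      | some s₀ =>
        refine ⟨s₀, rfl, ?_⟩
        cases hτ : τ' s₀ with
        | none => rw [hg] at hiter; simp [hak, hτ] at hiter
        | some k₁ =>
          have hb := pinv_spec hτ
          exact (Finset.mem_inter.mp (hbarm k₁ s₀ hb)).2
  have L0' : ∀ k s, ¬ cT k → a k = some s → s.1 ∈ S := by
    intro k s hck ha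
    rcases Finset.mem_union.mp (haarm k s ha) with h | h
    · exact h
    · by_cases hs : s.1 ∈ S
      · exact hs
      · exact absurd (show cT k from ⟨0, k, s, rfl, ha, h, hs⟩) hck
  set bS : Fin K → Prop := fun k =>
    cT k ∨ ∃ s k₁, b k = some s ∧ σ' s = some k₁ ∧ cT k₁ with hbS
  have LbS : ∀ k s k₀, bS k → b k = some s → σ' s = some k₀ → cT k₀ := by
    intro k s k₀ hb hbk hσ
    rcases hb with hct | ⟨s', k₁, hbk', hσ'', hct⟩
    · have hak₀ := pinv_spec hσ
      have hτ : τ' s = some k := pinv_some hbinj hbk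
      have hg₀ : g k₀ = some k := by rw [hg]; simp [hak₀, hτ]
      exact (L1 k₀ k hg₀).mpr hct
    · rw [hbk] at hbk'
      obtain rfl : s' = s := (Option.some_inj.mp hbk').symm
      rw [hσ] at hσ''
      obtain rfl : k₁ = k₀ := (Option.some_inj.mp hσ'').symm
      exact hct
  have Lcomp : ∀ k, a k ≠ none → bS k → cT k := by
    intro k hak hb
    rcases hb with hct | ⟨s, k₁, hbk, hσ, hct⟩
    · exact hct
    · have hak₁ := pinv_spec hσ
      have hτ : τ' s = some k := pinv_some hbinj hbk
      have hg₁ : g k₁ = some k := by rw [hg]; simp [hak₁, hτ]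
      exact (L1 k₁ k hg₁).mp hct
  set cT' : Fin K → Prop := fun k => (a k ≠ none ∧ cT k) ∨ (a k = none ∧ bS k) with hcT'
  have hcT'₁ : ∀ k, cT' k → bS k := by
    intro k h
    rcases h with h | h
    · exact Or.inl h.2
    · exact h.2
  have hcT'₂ : ∀ k s, cT' k → a k = some s → cT k := by
    intro k s h ha
    rcases h with h | h
    · exact h.2
    · rw [h.1] at ha; exact nomatch ha
  have hcT'₃ : ∀ k s, ¬ cT' k → a k = some s → ¬ cT k := by
    intro k s h ha hct
    exact h (Or.inl ⟨by rw [ha]; exact Option.some_ne_none _, hct⟩)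
  set a' : Fin K → Option (Σ m : Fin M, Fin (N m)) :=
    fun k => if cT' k then b k else a k with ha'
  set b' : Fin K → Option (Σ m : Fin M, Fin (N m)) :=
    fun k => if cT' k then a k else b k with hb'
  refine ⟨a', b', ?_, ?_, ?_, ?_, ?_⟩
  · -- a' injective
    intro k k' s hk hk'
    simp only [ha'] at hk hk'
    by_cases h1 : cT' k <;> by_cases h2 : cT' k'
    · rw [if_pos h1] at hk; rw [if_pos h2] at hk'
      exact hbinj k k' s hk hk'
    · rw [if_pos h1] at hk; rw [if_neg h2] at hk'
      have hσ : σ' s = some k' := pinv_some hainj hk'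
      have hct : cT k' := LbS k s k' (hcT'₁ k h1) hk hσ
      exact absurd hct (hcT'₃ k' s h2 hk')
    · rw [if_neg h1] at hk; rw [if_pos h2] at hk'
      have hσ : σ' s = some k := pinv_some hainj hk
      have hct : cT k := LbS k' s k (hcT'₁ k' h2) hk' hσ
      exact absurd hct (hcT'₃ k s h1 hk)
    · rw [if_neg h1] at hk; rw [if_neg h2] at hk'
      exact hainj k k' s hk hk'
  · -- a' arms in S
    intro k s hk
    simp only [ha'] at hk
    by_cases h1 : cT' k
    · rw [if_pos h1] at hk
      exact (Finset.mem_inter.mp (hbarm k s hk)).1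
    · rw [if_neg h1] at hk
      exact L0' k s (hcT'₃ k s h1 hk) hk
  · -- b' injective
    intro k k' s hk hk'
    simp only [hb'] at hk hk'
    by_cases h1 : cT' k <;> by_cases h2 : cT' k'
    · rw [if_pos h1] at hk; rw [if_pos h2] at hk'
      exact hainj k k' s hk hk'
    · rw [if_pos h1] at hk; rw [if_neg h2] at hk'
      have hct : cT k := hcT'₂ k s h1 hk
      have hσ : σ' s = some k := pinv_some hainj hk
      have hbs : bS k' := Or.inr ⟨s, k, hk', hσ, hct⟩
      cases hak' : a k' with
      | none => exact absurd (show cT' k' from Or.inr ⟨hak', hbs⟩) h2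
      | some s₁ =>
        refine absurd (show cT' k' from Or.inl ⟨?_, Lcomp k' ?_ hbs⟩) h2 <;>
          · rw [hak']; exact Option.some_ne_none _
    · rw [if_neg h1] at hk; rw [if_pos h2] at hk'
      have hct : cT k' := hcT'₂ k' s h2 hk'
      have hσ : σ' s = some k' := pinv_some hainj hk'
      have hbs : bS k := Or.inr ⟨s, k', hk, hσ, hct⟩
      cases hak : a k with
      | none => exact absurd (show cT' k from Or.inr ⟨hak, hbs⟩) h1
      | some s₁ =>
        refine absurd (show cT' k from Or.inl ⟨?_, Lcomp k ?_ hbs⟩) h1 <;>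
          · rw [hak]; exact Option.some_ne_none _
    · rw [if_neg h1] at hk; rw [if_neg h2] at hk'
      exact hbinj k k' s hk hk'
  · -- b' arms in T
    intro k s hk
    simp only [hb'] at hk
    by_cases h1 : cT' k
    · rw [if_pos h1] at hk
      have hct : cT k := hcT'₂ k s h1 hk
      obtain ⟨s', has', hT⟩ := L0 k hct
      rw [hk] at has'
      obtain rfl : s = s' := Option.some_inj.mp has'
      exact hT
    · rw [if_neg h1] at hk
      exact (Finset.mem_inter.mp (hbarm k s hk)).2
  · -- value preservation
    rw [matchVal, matchVal, matchVal, matchVal, ← Finset.sum_add_distrib,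
      ← Finset.sum_add_distrib]
    refine Finset.sum_congr rfl (fun k _ => ?_)
    simp only [ha', hb']
    by_cases h1 : cT' k
    · rw [if_pos h1, if_pos h1]
      exact add_comm _ _
    · rw [if_neg h1, if_neg h1]


end Submod

/-- Lemma 4: the optimal capacitated-assignment value `h` is submodular in the
set of available arms: `h(S) + h(T) ≥ h(S ∪ T) + h(S ∩ T)`. -/
theorem stmt_2 (M K : ℕ) (N : Fin M → ℕ) (X : Fin M → Fin K → ℝ)
    (hX : ∀ m k, 0 ≤ X m k) (S T : Finset (Fin M)) :
    hOpt M K N X (S ∪ T) + hOpt M K N X (S ∩ T) ≤ hOpt M K N X S + hOpt M K N X T := by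
  classical
  haveI h1 : Nonempty {C : Fin M → Finset (Fin K) //
      ∀ m₁ ∈ S ∪ T, ∀ m₂ ∈ S ∪ T, m₁ ≠ m₂ → Disjoint (C m₁) (C m₂)} :=
    ⟨⟨fun _ => ∅, fun _ _ _ _ _ => Finset.disjoint_empty_left _⟩⟩
  haveI h2 : Nonempty {C : Fin M → Finset (Fin K) //
      ∀ m₁ ∈ S ∩ T, ∀ m₂ ∈ S ∩ T, m₁ ≠ m₂ → Disjoint (C m₁) (C m₂)} :=
    ⟨⟨fun _ => ∅, fun _ _ _ _ _ => Finset.disjoint_empty_left _⟩⟩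
  have key : ∀ (C : Fin M → Finset (Fin K)),
      (∀ m₁ ∈ S ∪ T, ∀ m₂ ∈ S ∪ T, m₁ ≠ m₂ → Disjoint (C m₁) (C m₂)) →
      ∀ (D : Fin M → Finset (Fin K)),
      (∀ m₁ ∈ S ∩ T, ∀ m₂ ∈ S ∩ T, m₁ ≠ m₂ → Disjoint (D m₁) (D m₂)) →
      (∑ m ∈ S ∪ T, topSum (N m) (Multiset.map (X m) (C m).val)) +
        (∑ m ∈ S ∩ T, topSum (N m) (Multiset.map (X m) (D m).val)) ≤
        hOpt M K N X S + hOpt M K N X T := by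
    intro C hC D hD
    obtain ⟨x₁, hx₁i, hx₁a, hx₁v⟩ := Submod.exists_matching N X (S ∪ T) C hC
    obtain ⟨x₂, hx₂i, hx₂a, hx₂v⟩ := Submod.exists_matching N X (S ∩ T) D hD
    obtain ⟨a', b', hi1, ha1, hi2, ha2, hv⟩ := Submod.split N X S T x₁ x₂ hx₁i hx₁a hx₂i hx₂a
    have hA := Submod.matchVal_le_hOpt N X S a' hi1 ha1
    have hB := Submod.matchVal_le_hOpt N X T b' hi2 ha2
    rw [hx₁v, hx₂v]
    linarith
  have main : hOpt M K N X (S ∪ T) ≤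
      hOpt M K N X S + hOpt M K N X T - hOpt M K N X (S ∩ T) := by
    rw [show hOpt M K N X (S ∪ T) = _ from rfl]
    apply ciSup_le
    intro C
    have inner : hOpt M K N X (S ∩ T) ≤ hOpt M K N X S + hOpt M K N X T -
        ∑ m ∈ S ∪ T, topSum (N m) (Multiset.map (X m) (C.1 m).val) := by
      rw [show hOpt M K N X (S ∩ T) = _ from rfl]
      apply ciSup_le
      intro D
      have := key C.1 C.2 D.1 D.2
      linarith
    linarith
  linarith
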